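/- arXiv:2007.10197 — 6 statements merged into one kernel-verified Lean document; each statement's English description precedes it below -/
import Mathlib

section
/- Let σ be a linear automorphism of V and let (δ_{i,r}, δ_{i,l})_{i≥1} satisfy the sequence-pair recurrence for σ. Then for every integer d ≥ 2, ∑_{i=1}^{d−1} (−1)^{i+1} (σ^{⊗(d−i−1)} ⊗ δ_{i,l} ⊗ id_V) = (−1)^{d+1} ∑_{i=1}^{d−1} (−1)^i (δ_{i,r} ⊗ id_V^{⊗(d−i)}) as linear maps V^{⊗d} → V^{⊗(d+1)}. -/
open scoped TensorProduct
open PiTensorProduct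

namespace OrePaper

variable (k : Type*) [Field k] (V : Type*) [AddCommGroup V] [Module k V]

/-- The canonical isomorphism `V^{⊗a} ⊗ V^{⊗b} ≃ V^{⊗(a+b)}`. -/
noncomputable abbrev mulPow (a b : ℕ) :
    ((⨂[k]^a V) ⊗[k] (⨂[k]^b V)) ≃ₗ[k] ⨂[k]^(a+b) V :=
  TensorPower.mulEquiv

variable {k V}

/-- `f ⊗ g` for linear maps between tensor powers, under the canonical identifications. -/
noncomputable def tmap {a b c d : ℕ} (f : (⨂[k]^a V) →ₗ[k] ⨂[k]^c V)
    (g : (⨂[k]^b V) →ₗ[k] ⨂[k]^d V) :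
    (⨂[k]^(a+b) V) →ₗ[k] ⨂[k]^(c+d) V :=
  (mulPow k V c d).toLinearMap ∘ₗ TensorProduct.map f g ∘ₗ (mulPow k V a b).symm.toLinearMap

/-- Transport a linear map between tensor powers along equalities of exponents
(the canonical associativity identifications). -/
noncomputable def conv {a b a' b' : ℕ} (h1 : a = a') (h2 : b = b')
    (f : (⨂[k]^a V) →ₗ[k] ⨂[k]^b V) : (⨂[k]^a' V) →ₗ[k] ⨂[k]^b' V :=
  (TensorPower.cast k V h2).toLinearMap ∘ₗ f ∘ₗ (TensorPower.cast k V h1.symm).toLinearMap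

/-- `f^{⊗n}` for a linear endomorphism `f` of `V`. -/
noncomputable def pmap (f : V →ₗ[k] V) (n : ℕ) : (⨂[k]^n V) →ₗ[k] ⨂[k]^n V :=
  PiTensorProduct.map (fun _ => f)

/-- A family `(δ_{i,r}, δ_{i,l})_{i ≥ 1}` of linear maps
`δ_{i,r} : V^{⊗i} → V^{⊗i} ⊗ V` and `δ_{i,l} : V^{⊗i} → V ⊗ V^{⊗i}` (written, under the
canonical identifications, as maps `V^{⊗i} → V^{⊗(i+1)}`) satisfies the *sequence-pair
recurrence* for a linear automorphism `σ` of `V` if `δ_{1,r} = δ_{1,l}` and, for all `i ≥ 2`,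
`δ_{i,r} + (-1)^i δ_{i,l} = σ ⊗ δ_{i-1,r} + (-1)^i (δ_{i-1,l} ⊗ id_V)`. -/
def SeqPairRec (σ : V ≃ₗ[k] V)
    (δr δl : (i : ℕ) → (⨂[k]^i V) →ₗ[k] ⨂[k]^(i+1) V) : Prop :=
  δr 1 = δl 1 ∧
  ∀ (i : ℕ) (hi : 2 ≤ i),
    δr i + ((-1 : k)^i) • δl i
      = conv (by omega) (by omega) (tmap (pmap σ.toLinearMap 1) (δr (i-1)))
        + ((-1 : k)^i) • conv (by omega) (by omega) (tmap (δl (i-1)) (pmap (LinearMap.id) 1))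

-- ELEMENT LEVEL
noncomputable def tpmul {a b : ℕ} (x : ⨂[k]^a V) (y : ⨂[k]^b V) : ⨂[k]^(a+b) V :=
  mulPow k V a b (x ⊗ₜ y)

lemma tpmul_eq_gMul {a b : ℕ} (x : ⨂[k]^a V) (y : ⨂[k]^b V) :
    tpmul x y = @GradedMonoid.GMul.mul ℕ (fun i => ⨂[k]^i V) _ _ a b x y := (TensorPower.gMul_def x y).symm

lemma tpmul_add {a b : ℕ} (x : ⨂[k]^a V) (y y' : ⨂[k]^b V) :
    tpmul x (y + y') = tpmul x y + tpmul x y' := by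
  simp [tpmul, TensorProduct.tmul_add]

lemma add_tpmul {a b : ℕ} (x x' : ⨂[k]^a V) (y : ⨂[k]^b V) :
    tpmul (x + x') y = tpmul x y + tpmul x' y := by
  simp [tpmul, TensorProduct.add_tmul]

lemma smul_tpmul {a b : ℕ} (r : k) (x : ⨂[k]^a V) (y : ⨂[k]^b V) :
    tpmul (r • x) y = r • tpmul x y := by
  rw [tpmul, tpmul, ← TensorProduct.smul_tmul', map_smul]

lemma tpmul_smul {a b : ℕ} (r : k) (x : ⨂[k]^a V) (y : ⨂[k]^b V) :
    tpmul x (r • y) = r • tpmul x y := by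
  simp [tpmul]

lemma tpmul_zero {a b : ℕ} (x : ⨂[k]^a V) : tpmul x (0 : ⨂[k]^b V) = 0 := by
  simp [tpmul]

lemma zero_tpmul {a b : ℕ} (y : ⨂[k]^b V) : tpmul (0 : ⨂[k]^a V) y = 0 := by
  simp [tpmul]

lemma tpmul_tprod {a b : ℕ} (v : Fin a → V) (w : Fin b → V) :
    tpmul (tprod k v) (tprod k w) = tprod k (Fin.append v w) := by
  rw [tpmul_eq_gMul]; exact TensorPower.tprod_mul_tprod k v w

lemma ext_tpmul {a b m : ℕ} {F G : (⨂[k]^(a+b) V) →ₗ[k] ⨂[k]^m V}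
    (h : ∀ x y, F (tpmul x y) = G (tpmul x y)) : F = G := by
  have h2 : F ∘ₗ (mulPow k V a b).toLinearMap = G ∘ₗ (mulPow k V a b).toLinearMap :=
    TensorProduct.ext' h
  refine LinearMap.ext fun z => ?_
  simpa using LinearMap.congr_fun h2 ((mulPow k V a b).symm z)

lemma tpmul_induction {a b : ℕ} {p : (⨂[k]^(a+b) V) → Prop}
    (zero : p 0) (mul : ∀ x y, p (tpmul x y))
    (add : ∀ u v, p u → p v → p (u + v)) : ∀ z, p z := by
  intro z
  obtain ⟨w, rfl⟩ := (mulPow k V a b).surjective z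
  induction w with
  | zero => simpa using zero
  | tmul x y => exact mul x y
  | add u v hu hv => rw [map_add]; exact add _ _ hu hv

lemma tmap_tpmul {a b c e : ℕ} (f : (⨂[k]^a V) →ₗ[k] ⨂[k]^c V)
    (g : (⨂[k]^b V) →ₗ[k] ⨂[k]^e V) (x : ⨂[k]^a V) (y : ⨂[k]^b V) :
    tmap f g (tpmul x y) = tpmul (f x) (g y) := by
  simp [tmap, tpmul]

lemma conv_apply {a b a' b' : ℕ} (h1 : a = a') (h2 : b = b')
    (f : (⨂[k]^a V) →ₗ[k] ⨂[k]^b V) (x : ⨂[k]^a' V) :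
    conv h1 h2 f x = TensorPower.cast k V h2 (f (TensorPower.cast k V h1.symm x)) := rfl

lemma conv_rfl {a b : ℕ} (h1 : a = a) (h2 : b = b) (f : (⨂[k]^a V) →ₗ[k] ⨂[k]^b V) :
    conv h1 h2 f = f := by
  ext x; simp [conv]

lemma conv_conv {a b a' b' a'' b'' : ℕ} (h1 : a = a') (h2 : b = b') (g1 : a' = a'')
    (g2 : b' = b'') (f : (⨂[k]^a V) →ₗ[k] ⨂[k]^b V) :
    conv g1 g2 (conv h1 h2 f) = conv (h1.trans g1) (h2.trans g2) f := by
  subst g1; subst g2; subst h1; subst h2; simp [conv_rfl]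

lemma conv_add {a b a' b' : ℕ} (h1 : a = a') (h2 : b = b')
    (f g : (⨂[k]^a V) →ₗ[k] ⨂[k]^b V) :
    conv h1 h2 (f + g) = conv h1 h2 f + conv h1 h2 g := by
  simp [conv, LinearMap.comp_add, LinearMap.add_comp]

lemma conv_smul {a b a' b' : ℕ} (h1 : a = a') (h2 : b = b') (r : k)
    (f : (⨂[k]^a V) →ₗ[k] ⨂[k]^b V) :
    conv h1 h2 (r • f) = r • conv h1 h2 f := by
  ext x; simp [conv_apply]

lemma conv_sub {a b a' b' : ℕ} (h1 : a = a') (h2 : b = b')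
    (f g : (⨂[k]^a V) →ₗ[k] ⨂[k]^b V) :
    conv h1 h2 (f - g) = conv h1 h2 f - conv h1 h2 g := by
  ext x; simp [conv_apply]


lemma tmap_conv_left {a b c e a' c' : ℕ} (h1 : a = a') (h2 : c = c')
    (f : (⨂[k]^a V) →ₗ[k] ⨂[k]^c V) (g : (⨂[k]^b V) →ₗ[k] ⨂[k]^e V) :
    tmap (conv h1 h2 f) g = conv (by rw [h1]) (by rw [h2]) (tmap f g) := by
  subst h1; subst h2; rw [conv_rfl, conv_rfl]

lemma tmap_conv_right {a b c e b' e' : ℕ} (h1 : b = b') (h2 : e = e')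
    (f : (⨂[k]^a V) →ₗ[k] ⨂[k]^c V) (g : (⨂[k]^b V) →ₗ[k] ⨂[k]^e V) :
    tmap f (conv h1 h2 g) = conv (by rw [h1]) (by rw [h2]) (tmap f g) := by
  subst h1; subst h2; rw [conv_rfl, conv_rfl]

lemma tmap_add_left {a b c e : ℕ} (f f' : (⨂[k]^a V) →ₗ[k] ⨂[k]^c V)
    (g : (⨂[k]^b V) →ₗ[k] ⨂[k]^e V) :
    tmap (f + f') g = tmap f g + tmap f' g := by
  simp [tmap, TensorProduct.map_add_left, LinearMap.add_comp, LinearMap.comp_add]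

lemma tmap_add_right {a b c e : ℕ} (f : (⨂[k]^a V) →ₗ[k] ⨂[k]^c V)
    (g g' : (⨂[k]^b V) →ₗ[k] ⨂[k]^e V) :
    tmap f (g + g') = tmap f g + tmap f g' := by
  simp [tmap, TensorProduct.map_add_right, LinearMap.add_comp, LinearMap.comp_add]

lemma tmap_smul_left {a b c e : ℕ} (r : k) (f : (⨂[k]^a V) →ₗ[k] ⨂[k]^c V)
    (g : (⨂[k]^b V) →ₗ[k] ⨂[k]^e V) :
    tmap (r • f) g = r • tmap f g := by
  simp [tmap, TensorProduct.map_smul_left, LinearMap.smul_comp, LinearMap.comp_smul]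

lemma tmap_smul_right {a b c e : ℕ} (r : k) (f : (⨂[k]^a V) →ₗ[k] ⨂[k]^c V)
    (g : (⨂[k]^b V) →ₗ[k] ⨂[k]^e V) :
    tmap f (r • g) = r • tmap f g := by
  simp [tmap, TensorProduct.map_smul_right, LinearMap.smul_comp, LinearMap.comp_smul]

lemma tmap_sub_left {a b c e : ℕ} (f f' : (⨂[k]^a V) →ₗ[k] ⨂[k]^c V)
    (g : (⨂[k]^b V) →ₗ[k] ⨂[k]^e V) :
    tmap (f - f') g = tmap f g - tmap f' g := by
  have := tmap_add_left (f - f') f' g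
  rw [sub_add_cancel] at this
  rw [this]; abel

lemma pmap_tprod (f : V →ₗ[k] V) (n : ℕ) (v : Fin n → V) :
    pmap f n (tprod k v) = tprod k (fun i => f (v i)) := by
  simp [pmap]

lemma pmap_id (n : ℕ) : pmap (LinearMap.id : V →ₗ[k] V) n = LinearMap.id := by
  rw [pmap]; exact PiTensorProduct.map_id

lemma pmap_zero_eq_id (f : V →ₗ[k] V) : pmap f 0 = (LinearMap.id : (⨂[k]^0 V) →ₗ[k] ⨂[k]^0 V) := by
  refine PiTensorProduct.ext (MultilinearMap.ext fun v => ?_)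
  simp only [LinearMap.compMultilinearMap_apply, pmap_tprod, LinearMap.id_apply]
  congr 1
  funext i
  exact i.elim0

lemma append_lcomp {a b : ℕ} (f : V →ₗ[k] V) (v : Fin a → V) (w : Fin b → V) :
    (fun i => f (Fin.append v w i)) = Fin.append (fun i => f (v i)) (fun i => f (w i)) := by
  funext i
  induction i using Fin.addCases with
  | left i => simp [Fin.append_left]
  | right i => simp [Fin.append_right]

lemma pmap_tpmul {a b : ℕ} (f : V →ₗ[k] V) (x : ⨂[k]^a V) (y : ⨂[k]^b V) :
    pmap f (a+b) (tpmul x y) = tpmul (pmap f a x) (pmap f b y) := by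
  induction x using PiTensorProduct.induction_on with
  | smul_tprod r v =>
    induction y using PiTensorProduct.induction_on with
    | smul_tprod s w =>
      rw [smul_tpmul, tpmul_smul, map_smul, map_smul, map_smul, map_smul, smul_tpmul, tpmul_smul,
        tpmul_tprod, pmap_tprod, pmap_tprod, pmap_tprod, tpmul_tprod, append_lcomp]
    | add u u' hu hu' =>
      rw [tpmul_add, map_add, map_add, hu, hu', tpmul_add]
  | add x x' hx hx' =>
    rw [add_tpmul, map_add, map_add, hx, hx', add_tpmul]

lemma pmap_split {a b : ℕ} (f : V →ₗ[k] V) :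
    (pmap f (a+b) : (⨂[k]^(a+b) V) →ₗ[k] ⨂[k]^(a+b) V) = tmap (pmap f a) (pmap f b) :=
  ext_tpmul fun x y => by rw [tmap_tpmul, pmap_tpmul]

lemma conv_pmap {n m : ℕ} (h : n = m) (f : V →ₗ[k] V) :
    conv h h (pmap f n) = pmap f m := by
  subst h; exact conv_rfl _ _ _

lemma tpmul_assoc {a b c : ℕ} (x : ⨂[k]^a V) (y : ⨂[k]^b V) (z : ⨂[k]^c V) :
    TensorPower.cast k V (Nat.add_assoc a b c) (tpmul (tpmul x y) z) = tpmul x (tpmul y z) := by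
  simp only [tpmul_eq_gMul]
  exact TensorPower.mul_assoc x y z

lemma tpmul_assoc' {a b c : ℕ} (x : ⨂[k]^a V) (y : ⨂[k]^b V) (z : ⨂[k]^c V) :
    TensorPower.cast k V (Nat.add_assoc a b c).symm (tpmul x (tpmul y z)) = tpmul (tpmul x y) z := by
  rw [← tpmul_assoc x y z, TensorPower.cast_cast]
  simp

lemma tmap_assoc {a b c a' b' c' : ℕ} (f : (⨂[k]^a V) →ₗ[k] ⨂[k]^a' V)
    (g : (⨂[k]^b V) →ₗ[k] ⨂[k]^b' V) (h : (⨂[k]^c V) →ₗ[k] ⨂[k]^c' V) :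
    conv (Nat.add_assoc a b c) (Nat.add_assoc a' b' c') (tmap (tmap f g) h)
      = tmap f (tmap g h) := by
  refine ext_tpmul fun x w => ?_
  induction w using tpmul_induction with
  | zero => rw [tpmul_zero, map_zero, map_zero]
  | mul y z =>
    rw [conv_apply, tpmul_assoc', tmap_tpmul, tmap_tpmul, tmap_tpmul, tmap_tpmul, tpmul_assoc]
  | add u v hu hv => rw [tpmul_add, map_add, map_add, hu, hv]

lemma tpmul_one_cast {b : ℕ} (y : ⨂[k]^b V) :
    tpmul (tprod k (Fin.elim0 : Fin 0 → V)) y = TensorPower.cast k V (Nat.zero_add b).symm y := by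
  have h := TensorPower.one_mul (R := k) (M := V) y
  rw [TensorPower.gOne_def] at h
  have h2 := congrArg (TensorPower.cast k V (Nat.zero_add b).symm) h
  rw [TensorPower.cast_cast, TensorPower.cast_refl, LinearEquiv.refl_apply] at h2
  rw [tpmul_eq_gMul, h2]


lemma tmap_idzero {b c : ℕ} (g : (⨂[k]^b V) →ₗ[k] ⨂[k]^c V) :
    tmap (LinearMap.id : (⨂[k]^0 V) →ₗ[k] ⨂[k]^0 V) g
      = conv (Nat.zero_add b).symm (Nat.zero_add c).symm g := by
  refine ext_tpmul fun x y => ?_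
  induction x using PiTensorProduct.induction_on with
  | smul_tprod r v =>
    have hv : v = Fin.elim0 := funext fun i => i.elim0
    subst hv
    rw [smul_tpmul, map_smul, map_smul, tmap_tpmul, LinearMap.id_apply, tpmul_one_cast,
      tpmul_one_cast, conv_apply, TensorPower.cast_cast, TensorPower.cast_refl,
      LinearEquiv.refl_apply]
  | add u u' hu hu' =>
    rw [add_tpmul, map_add, map_add, hu, hu']


section Maps

variable (σ : V ≃ₗ[k] V) (δr δl : (i : ℕ) → (⨂[k]^i V) →ₗ[k] ⨂[k]^(i+1) V)

noncomputable def Lm (d i : ℕ) : (⨂[k]^d V) →ₗ[k] ⨂[k]^(d+1) V :=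
  if h : i + 1 ≤ d then
    conv (by omega) (by omega)
      (tmap (tmap (pmap σ.toLinearMap (d-i-1)) (δl i)) (pmap (LinearMap.id) 1))
  else 0

noncomputable def Rm (d i : ℕ) : (⨂[k]^d V) →ₗ[k] ⨂[k]^(d+1) V :=
  if h : i ≤ d then
    conv (by omega) (by omega) (tmap (δr i) (pmap (LinearMap.id) (d-i)))
  else 0

noncomputable def Tm (d i : ℕ) : (⨂[k]^d V) →ₗ[k] ⨂[k]^(d+1) V :=
  if h : i ≤ d then
    conv (by omega) (by omega) (tmap (δl i) (pmap (LinearMap.id) (d-i)))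
  else 0

noncomputable def Lsig {a b : ℕ} (f : (⨂[k]^a V) →ₗ[k] ⨂[k]^b V) :
    (⨂[k]^(a+1) V) →ₗ[k] ⨂[k]^(b+1) V :=
  conv (Nat.add_comm 1 a) (Nat.add_comm 1 b) (tmap (pmap σ.toLinearMap 1) f)

lemma Lm_eq (d i p : ℕ) (h : p + i + 1 = d) :
    Lm σ δl d i = conv (by omega) (by omega)
      (tmap (tmap (pmap σ.toLinearMap p) (δl i)) (pmap (LinearMap.id) 1)) := by
  have hle : i + 1 ≤ d := by omega
  rw [Lm, dif_pos hle]
  have hp : p = d - i - 1 := by omega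
  subst hp
  rfl

lemma Rm_eq (d i m : ℕ) (h : i + m = d) :
    Rm δr d i = conv (by omega) (by omega) (tmap (δr i) (pmap (LinearMap.id) m)) := by
  have hle : i ≤ d := by omega
  rw [Rm, dif_pos hle]
  have hm : m = d - i := by omega
  subst hm
  rfl

lemma Tm_eq (d i m : ℕ) (h : i + m = d) :
    Tm δl d i = conv (by omega) (by omega) (tmap (δl i) (pmap (LinearMap.id) m)) := by
  have hle : i ≤ d := by omega
  rw [Tm, dif_pos hle]
  have hm : m = d - i := by omega
  subst hm
  rfl

lemma Lsig_add {a b : ℕ} (f g : (⨂[k]^a V) →ₗ[k] ⨂[k]^b V) :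
    Lsig σ (f + g) = Lsig σ f + Lsig σ g := by
  rw [Lsig, Lsig, Lsig, tmap_add_right, conv_add]

lemma Lsig_smul {a b : ℕ} (r : k) (f : (⨂[k]^a V) →ₗ[k] ⨂[k]^b V) :
    Lsig σ (r • f) = r • Lsig σ f := by
  rw [Lsig, Lsig, tmap_smul_right, conv_smul]

lemma Lsig_zero {a b : ℕ} :
    Lsig σ (0 : (⨂[k]^a V) →ₗ[k] ⨂[k]^b V) = 0 := by
  have h := Lsig_add σ (0 : (⨂[k]^a V) →ₗ[k] ⨂[k]^b V) 0
  rw [add_zero] at h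
  exact left_eq_add.mp h

lemma Lsig_sum {a b : ℕ} {ι : Type*} (s : Finset ι)
    (f : ι → (⨂[k]^a V) →ₗ[k] ⨂[k]^b V) :
    Lsig σ (∑ i ∈ s, f i) = ∑ i ∈ s, Lsig σ (f i) := by
  classical
  induction s using Finset.induction_on with
  | empty => simp [Lsig_zero]
  | insert _ _ hmem ih =>
    rw [Finset.sum_insert hmem, Finset.sum_insert hmem, Lsig_add, ih]

lemma K1 {d i : ℕ} (h2 : i + 1 ≤ d) :
    Lm σ δl (d+1) i = Lsig σ (Lm σ δl d i) := by
  obtain ⟨p, hp⟩ : ∃ p, p + i + 1 = d := ⟨d - i - 1, by omega⟩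
  rw [Lm_eq σ δl (d+1) i (p+1) (by omega), Lm_eq σ δl d i p hp, Lsig]
  rw [tmap_conv_right, conv_conv,
    ← tmap_assoc (pmap σ.toLinearMap 1) (tmap (pmap σ.toLinearMap p) (δl i))
      (pmap (LinearMap.id) 1), conv_conv,
    ← tmap_assoc (pmap σ.toLinearMap 1) (pmap σ.toLinearMap p) (δl i),
    ← pmap_split,
    show pmap σ.toLinearMap (p+1)
        = conv (Nat.add_comm 1 p) (Nat.add_comm 1 p) (pmap σ.toLinearMap (1+p)) from
      (conv_pmap _ _).symm]
  simp only [tmap_conv_left, conv_conv]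


lemma tmap_assoc' {a b c a' b' c' : ℕ} (f : (⨂[k]^a V) →ₗ[k] ⨂[k]^a' V)
    (g : (⨂[k]^b V) →ₗ[k] ⨂[k]^b' V) (h : (⨂[k]^c V) →ₗ[k] ⨂[k]^c' V) :
    tmap (tmap f g) h = conv (Nat.add_assoc a b c).symm (Nat.add_assoc a' b' c').symm
      (tmap f (tmap g h)) := by
  rw [← tmap_assoc f g h, conv_conv, conv_rfl]

lemma K4 (hpair : SeqPairRec σ δr δl) {d i : ℕ} (hi : 1 ≤ i) (h2 : i + 1 ≤ d) :
    Lsig σ (Rm δr d i)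
      = Rm δr (d+1) (i+1) + ((-1:k)^(i+1)) • Tm δl (d+1) (i+1)
        - ((-1:k)^(i+1)) • Tm δl (d+1) i := by
  obtain ⟨m, hm⟩ : ∃ m, i + m = d := ⟨d - i, by omega⟩
  rw [Rm_eq δr d i m hm, Rm_eq δr (d+1) (i+1) m (by omega),
    Tm_eq δl (d+1) (i+1) m (by omega), Tm_eq δl (d+1) i (m+1) (by omega), Lsig]
  rw [tmap_conv_right, conv_conv,
    ← tmap_assoc (pmap σ.toLinearMap 1) (δr i) (pmap (LinearMap.id) m), conv_conv]
  have hrec : δr (i+1) + ((-1:k)^(i+1)) • δl (i+1)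
      = conv (show 1 + i = i+1 by omega) (show 1+(i+1) = (i+1)+1 by omega)
          (tmap (pmap σ.toLinearMap 1) (δr i))
        + ((-1:k)^(i+1)) • conv (show i+1 = i+1 from rfl) (show (i+1)+1 = (i+1)+1 from rfl)
          (tmap (δl i) (pmap (LinearMap.id) 1)) := hpair.2 (i+1) (by omega)
  have key := eq_sub_of_add_eq hrec.symm
  have key2 := congrArg
    (conv (show i+1 = 1+i by omega) (show (i+1)+1 = 1+(i+1) by omega)) key
  rw [conv_conv, conv_rfl] at key2
  rw [key2]
  simp only [tmap_conv_left, tmap_sub_left, tmap_add_left, tmap_smul_left, conv_sub, conv_add,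
    conv_smul, conv_conv]
  rw [tmap_assoc' (δl i) (pmap (LinearMap.id) 1) (pmap (LinearMap.id) m), ← pmap_split,
    show pmap (LinearMap.id : V →ₗ[k] V) (m+1)
        = conv (Nat.add_comm 1 m) (Nat.add_comm 1 m) (pmap (LinearMap.id) (1+m)) from
      (conv_pmap _ _).symm]
  simp only [tmap_conv_left, tmap_conv_right, conv_conv, conv_sub, conv_add, conv_smul]

lemma K5 (hpair : SeqPairRec σ δr δl) (D : ℕ) (hD : 1 ≤ D) : Tm δl D 1 = Rm δr D 1 := by
  obtain ⟨m, hm⟩ : ∃ m, 1 + m = D := ⟨D - 1, by omega⟩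
  rw [Tm_eq δl D 1 m hm, Rm_eq δr D 1 m hm, hpair.1]

lemma K6 (D j : ℕ) (hj : j + 1 = D) : Lm σ δl D j = Tm δl D j := by
  rw [Lm_eq σ δl D j 0 (by omega), Tm_eq δl D j 1 (by omega),
    pmap_zero_eq_id σ.toLinearMap, tmap_idzero]
  simp only [tmap_conv_left, conv_conv]


lemma main_lemma (hpair : SeqPairRec σ δr δl) (d : ℕ) (hd : 2 ≤ d) :
    ∑ i ∈ Finset.range (d-1), ((-1:k)^(i+1+1)) • Lm σ δl d (i+1)
      = ((-1:k)^(d+1)) • ∑ i ∈ Finset.range (d-1), ((-1:k)^(i+1)) • Rm δr d (i+1) := by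
  induction d, hd using Nat.le_induction with
  | base =>
    rw [show (2:ℕ) - 1 = 1 from rfl, Finset.sum_range_one, Finset.sum_range_one,
      K6 σ δl 2 1 rfl, K5 σ δr δl hpair 2 (by omega)]
    module
  | succ d hd IH =>
    have hd1 : d - 1 + 1 = d := by omega
    have hrange : Finset.range d = Finset.range ((d-1)+1) := by rw [hd1]
    simp only [Nat.add_sub_cancel]
    have splitL : ∑ i ∈ Finset.range d, ((-1:k)^(i+1+1)) • Lm σ δl (d+1) (i+1)
        = (∑ i ∈ Finset.range (d-1), ((-1:k)^(i+1+1)) • Lm σ δl (d+1) (i+1))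
          + ((-1:k)^(d+1)) • Lm σ δl (d+1) d := by
      rw [hrange, Finset.sum_range_succ, hd1]
    have splitR : ∑ i ∈ Finset.range d, ((-1:k)^(i+1)) • Rm δr (d+1) (i+1)
        = (∑ i ∈ Finset.range (d-1), ((-1:k)^(i+1+1)) • Rm δr (d+1) (i+1+1))
          + ((-1:k)^(0+1)) • Rm δr (d+1) (0+1) := by
      rw [hrange, Finset.sum_range_succ']
    have K1s : ∑ i ∈ Finset.range (d-1), ((-1:k)^(i+1+1)) • Lm σ δl (d+1) (i+1)
        = ∑ i ∈ Finset.range (d-1), ((-1:k)^(i+1+1)) • Lsig σ (Lm σ δl d (i+1)) :=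
      Finset.sum_congr rfl fun i hi => by
        rw [K1 σ δl (show (i+1) + 1 ≤ d by have := Finset.mem_range.mp hi; omega)]
    have Lsum : ∑ i ∈ Finset.range (d-1), ((-1:k)^(i+1+1)) • Lsig σ (Lm σ δl d (i+1))
        = Lsig σ (∑ i ∈ Finset.range (d-1), ((-1:k)^(i+1+1)) • Lm σ δl d (i+1)) := by
      rw [Lsig_sum]
      exact Finset.sum_congr rfl fun i _ => (Lsig_smul σ _ _).symm
    have K4s : Lsig σ (∑ i ∈ Finset.range (d-1), ((-1:k)^(i+1)) • Rm δr d (i+1))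
        = (∑ i ∈ Finset.range (d-1), ((-1:k)^(i+1)) • Rm δr (d+1) (i+1+1))
          - (∑ i ∈ Finset.range (d-1), Tm δl (d+1) (i+1+1))
          + (∑ i ∈ Finset.range (d-1), Tm δl (d+1) (i+1)) := by
      rw [Lsig_sum, ← Finset.sum_sub_distrib, ← Finset.sum_add_distrib]
      refine Finset.sum_congr rfl fun i hi => ?_
      have hi' := Finset.mem_range.mp hi
      rw [Lsig_smul, K4 σ δr δl hpair (by omega) (by omega)]
      have hmul : ((-1:k)^(i+1)) * ((-1:k)^(i+1+1)) = -1 := by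
        rw [← pow_add]
        exact Odd.neg_one_pow ⟨i+1, by ring⟩
      rw [smul_sub, smul_add, smul_smul, smul_smul, hmul]
      simp only [neg_one_smul]
      abel
    have tele1 : ∑ i ∈ Finset.range d, Tm δl (d+1) (i+1)
        = (∑ i ∈ Finset.range (d-1), Tm δl (d+1) (i+1)) + Tm δl (d+1) d := by
      rw [hrange, Finset.sum_range_succ, hd1]
    have tele2 : ∑ i ∈ Finset.range d, Tm δl (d+1) (i+1)
        = (∑ i ∈ Finset.range (d-1), Tm δl (d+1) (i+1+1)) + Tm δl (d+1) (0+1) := by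
      rw [hrange, Finset.sum_range_succ']
    have tele : (∑ i ∈ Finset.range (d-1), Tm δl (d+1) (i+1))
        = (∑ i ∈ Finset.range (d-1), Tm δl (d+1) (i+1+1)) + Tm δl (d+1) (0+1)
          - Tm δl (d+1) d :=
      eq_sub_of_add_eq (tele1.symm.trans tele2)
    have hSRneg : ∑ i ∈ Finset.range (d-1), ((-1:k)^(i+1+1)) • Rm δr (d+1) (i+1+1)
        = - ∑ i ∈ Finset.range (d-1), ((-1:k)^(i+1)) • Rm δr (d+1) (i+1+1) := by
      rw [← Finset.sum_neg_distrib]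
      exact Finset.sum_congr rfl fun i _ => by
        rw [pow_succ, mul_smul, neg_one_smul, smul_neg]
    rw [splitL, splitR, K1s, Lsum, IH, Lsig_smul, K4s, tele, hSRneg,
      K6 σ δl (d+1) d rfl, K5 σ δr δl hpair (d+1) (by omega)]
    module

end Maps

/-- **Proposition 2.4(b)**: if `(δ_{i,r}, δ_{i,l})` satisfies the sequence-pair recurrence for
`σ`, then for every `d ≥ 2`,
`∑_{i=1}^{d−1} (−1)^{i+1} (σ^{⊗(d−i−1)} ⊗ δ_{i,l} ⊗ id_V) = (−1)^{d+1} ∑_{i=1}^{d−1} (−1)^i (δ_{i,r} ⊗ id_V^{⊗(d−i)})`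
as linear maps `V^{⊗d} → V^{⊗(d+1)}`. -/
theorem prop_2_4_b (σ : V ≃ₗ[k] V)
    (δr δl : (i : ℕ) → (⨂[k]^i V) →ₗ[k] ⨂[k]^(i+1) V)
    (hpair : SeqPairRec σ δr δl)
    (d : ℕ) (hd : 2 ≤ d) :
    (∑ i : Fin (d-1), ((-1 : k)^(((i : ℕ)+1)+1)) •
        conv (a' := d) (b' := d+1) (by have := i.isLt; omega) (by have := i.isLt; omega)
          (tmap (tmap (pmap σ.toLinearMap (d - ((i : ℕ)+1) - 1)) (δl ((i : ℕ)+1)))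
            (pmap (LinearMap.id) 1)))
    = ((-1 : k)^(d+1)) •
      ∑ i : Fin (d-1), ((-1 : k)^((i : ℕ)+1)) •
        conv (a' := d) (b' := d+1) (by have := i.isLt; omega) (by have := i.isLt; omega)
          (tmap (δr ((i : ℕ)+1)) (pmap (LinearMap.id) (d - ((i : ℕ)+1)))) := by
  have hL : (∑ i : Fin (d-1), ((-1 : k)^(((i : ℕ)+1)+1)) •
        conv (a' := d) (b' := d+1) (by have := i.isLt; omega) (by have := i.isLt; omega)
          (tmap (tmap (pmap σ.toLinearMap (d - ((i : ℕ)+1) - 1)) (δl ((i : ℕ)+1)))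
            (pmap (LinearMap.id) 1)))
      = ∑ i : Fin (d-1), ((-1:k)^((i:ℕ)+1+1)) • Lm σ δl d ((i:ℕ)+1) :=
    Finset.sum_congr rfl fun i _ => by
      rw [Lm, dif_pos (show (i:ℕ)+1+1 ≤ d by have := i.isLt; omega)]
  have hR : (∑ i : Fin (d-1), ((-1 : k)^((i : ℕ)+1)) •
        conv (a' := d) (b' := d+1) (by have := i.isLt; omega) (by have := i.isLt; omega)
          (tmap (δr ((i : ℕ)+1)) (pmap (LinearMap.id) (d - ((i : ℕ)+1)))))
      = ∑ i : Fin (d-1), ((-1:k)^((i:ℕ)+1)) • Rm δr d ((i:ℕ)+1) :=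
    Finset.sum_congr rfl fun i _ => by
      rw [Rm, dif_pos (show (i:ℕ)+1 ≤ d by have := i.isLt; omega)]
  rw [hL, hR,
    Fin.sum_univ_eq_sum_range (fun j => ((-1:k)^(j+1+1)) • Lm σ δl d (j+1)) (d-1),
    Fin.sum_univ_eq_sum_range (fun j => ((-1:k)^(j+1)) • Rm δr d (j+1)) (d-1)]
  exact main_lemma σ δr δl hpair d hd

end OrePaper
end

section
/- Suppose σ(x_1) = m_{11} x_1 + m_{12} x_2 and σ(x_2) = m_{21} x_1 + m_{22} x_2 with m_{11}m_{22} − m_{12}m_{21} ≠ 0, and let r = x_1⊗x_2 − x_2⊗x_1 ∈ V⊗V. Then D(r) ∈ r⊗V + V⊗r if and only if the following four equations hold: m_{21}γ_{11} + (1−m_{11})γ_{21} = 0; (1−m_{22})γ_{13} + m_{12}γ_{23} = 0; (m_{22}−1)γ_{11} + m_{21}γ_{12} − m_{12}γ_{21} + (1−m_{11})γ_{22} = 0; (m_{22}−1)γ_{12} + m_{21}γ_{13} − m_{12}γ_{22} + (1−m_{11})γ_{23} = 0. In that case, D(r) = r⊗δ_r + δ_l⊗r with δ_r = (m_{22}γ_{11}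 − m_{12}γ_{21} + γ_{22}) x_1 + (m_{11}γ_{23} − m_{21}γ_{13}) x_2 and δ_l = γ_{11} x_1 + (m_{22}γ_{12} − m_{12}γ_{22} + γ_{23}) x_2. -/
open scoped TensorProduct

namespace OrePaper

/-- **Lemma 4.5** (commutative polynomial case): for `A = k[x₁,x₂]` with relation `r = x₁⊗x₂ − x₂⊗x₁`, the condition `D(r) = (σ⊗δ + δ⊗id)(r) ∈ r⊗V + V⊗r` is equivalent to the four listed equations, in which case `D(r) = r⊗δ_r + δ_l⊗r` with the indicated `δ_r, δ_l`. -/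
theorem lemma_4_5 {k : Type*} [Field k] [CharZero k]
    {V : Type*} [AddCommGroup V] [Module k V]
    (b : Module.Basis (Fin 2) k V)
    (σ : V →ₗ[k] V) (δ : V →ₗ[k] V ⊗[k] V)
    (m11 m12 m21 m22 : k) (γ11 γ12 γ13 γ21 γ22 γ23 : k)
    (hσ1 : σ (b 0) = m11 • b 0 + m12 • b 1)
    (hσ2 : σ (b 1) = m21 • b 0 + m22 • b 1)
    (hdet : m11 * m22 - m12 * m21 ≠ 0)
    (hδ1 : δ (b 0) = γ11 • (b 0 ⊗ₜ[k] b 0) + γ12 • (b 1 ⊗ₜ[k] b 0) + γ13 • (b 1 ⊗ₜ[k] b 1))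
    (hδ2 : δ (b 1) = γ21 • (b 0 ⊗ₜ[k] b 0) + γ22 • (b 1 ⊗ₜ[k] b 0) + γ23 • (b 1 ⊗ₜ[k] b 1))
    (D : V ⊗[k] V →ₗ[k] V ⊗[k] (V ⊗[k] V))
    (hD : D = TensorProduct.map σ δ
        + (TensorProduct.assoc k V V V).toLinearMap ∘ₗ TensorProduct.map δ LinearMap.id)
    (r : V ⊗[k] V) (hr : r = b 0 ⊗ₜ[k] b 1 - b 1 ⊗ₜ[k] b 0) :
    (D r ∈ LinearMap.range
          ((TensorProduct.assoc k V V V).toLinearMap ∘ₗ TensorProduct.mk k (V ⊗[k] V) V r)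
        ⊔ LinearMap.range ((TensorProduct.mk k V (V ⊗[k] V)).flip r)
      ↔ (m21 * γ11 + (1 - m11) * γ21 = 0
        ∧ (1 - m22) * γ13 + m12 * γ23 = 0
        ∧ (m22 - 1) * γ11 + m21 * γ12 - m12 * γ21 + (1 - m11) * γ22 = 0
        ∧ (m22 - 1) * γ12 + m21 * γ13 - m12 * γ22 + (1 - m11) * γ23 = 0))
    ∧ ((m21 * γ11 + (1 - m11) * γ21 = 0
        ∧ (1 - m22) * γ13 + m12 * γ23 = 0
        ∧ (m22 - 1) * γ11 + m21 * γ12 - m12 * γ21 + (1 - m11) * γ22 = 0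
        ∧ (m22 - 1) * γ12 + m21 * γ13 - m12 * γ22 + (1 - m11) * γ23 = 0) →
        D r = (TensorProduct.assoc k V V V) (r ⊗ₜ[k] ((m22 * γ11 - m12 * γ21 + γ22) • b 0 + (m11 * γ23 - m21 * γ13) • b 1))
            + (γ11 • b 0 + (m22 * γ12 - m12 * γ22 + γ23) • b 1) ⊗ₜ[k] r) := by
  have hDr : D r = (m11*γ21 - m21*γ11 - γ21) • (b 0 ⊗ₜ[k] (b 0 ⊗ₜ[k] b 0))
        + γ11 • (b 0 ⊗ₜ[k] (b 0 ⊗ₜ[k] b 1))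
        + (m11*γ22 - m21*γ12) • (b 0 ⊗ₜ[k] (b 1 ⊗ₜ[k] b 0))
        + (m11*γ23 - m21*γ13) • (b 0 ⊗ₜ[k] (b 1 ⊗ₜ[k] b 1))
        + (m12*γ21 - m22*γ11 - γ22) • (b 1 ⊗ₜ[k] (b 0 ⊗ₜ[k] b 0))
        + γ12 • (b 1 ⊗ₜ[k] (b 0 ⊗ₜ[k] b 1))
        + (m12*γ22 - m22*γ12 - γ23) • (b 1 ⊗ₜ[k] (b 1 ⊗ₜ[k] b 0))
        + (m12*γ23 - m22*γ13 + γ13) • (b 1 ⊗ₜ[k] (b 1 ⊗ₜ[k] b 1)) := by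
    rw [hD, hr]
    simp only [LinearMap.add_apply, LinearMap.coe_comp, Function.comp_apply,
      LinearEquiv.coe_coe, map_sub, TensorProduct.map_tmul, hσ1, hσ2, hδ1, hδ2,
      LinearMap.id_coe, id_eq, map_add, map_smul,
      TensorProduct.add_tmul, ← TensorProduct.smul_tmul', TensorProduct.tmul_add,
      TensorProduct.tmul_smul, TensorProduct.assoc_tmul]
    module
  -- the claimed equality under the equations
  have part2 : (m21 * γ11 + (1 - m11) * γ21 = 0
        ∧ (1 - m22) * γ13 + m12 * γ23 = 0
        ∧ (m22 - 1) * γ11 + m21 * γ12 - m12 * γ21 + (1 - m11) * γ22 = 0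
        ∧ (m22 - 1) * γ12 + m21 * γ13 - m12 * γ22 + (1 - m11) * γ23 = 0) →
        D r = (TensorProduct.assoc k V V V) (r ⊗ₜ[k] ((m22 * γ11 - m12 * γ21 + γ22) • b 0 + (m11 * γ23 - m21 * γ13) • b 1))
            + (γ11 • b 0 + (m22 * γ12 - m12 * γ22 + γ23) • b 1) ⊗ₜ[k] r := by
    rintro ⟨e1, e2, e3, e4⟩
    rw [hDr, hr]
    simp only [TensorProduct.tmul_add, TensorProduct.tmul_sub, TensorProduct.tmul_smul,
      TensorProduct.add_tmul, TensorProduct.sub_tmul, ← TensorProduct.smul_tmul',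
      map_add, map_sub, map_smul, TensorProduct.assoc_tmul]
    match_scalars
    · linear_combination -e1
    · ring
    · linear_combination -e3
    · ring
    · ring
    · linear_combination -e4
    · ring
    · linear_combination e2
  refine ⟨⟨fun h => ?_, fun he => ?_⟩, part2⟩
  · -- membership → equations
    rw [Submodule.mem_sup] at h
    obtain ⟨y, hy, z, hz, hyz⟩ := h
    obtain ⟨c, rfl⟩ := hy
    obtain ⟨c', rfl⟩ := hz
    have hexp : ∀ v : V, v = b.repr v 0 • b 0 + b.repr v 1 • b 1 := by
      intro v
      have := b.sum_repr v
      rw [Fin.sum_univ_two] at this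
      exact this.symm
    set c1 := b.repr c 0 with hc1
    set c2 := b.repr c 1 with hc2
    set d1 := b.repr c' 0 with hd1
    set d2 := b.repr c' 1 with hd2
    rw [LinearMap.comp_apply, LinearEquiv.coe_coe, TensorProduct.mk_apply,
      LinearMap.flip_apply, TensorProduct.mk_apply, hDr, hexp c, hexp c', hr] at hyz
    simp only [TensorProduct.tmul_add, TensorProduct.tmul_smul, TensorProduct.add_tmul,
      TensorProduct.sub_tmul, ← TensorProduct.smul_tmul', map_add, map_sub, map_smul,
      TensorProduct.assoc_tmul, ← hc1, ← hc2, ← hd1, ← hd2] at hyz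
    have key := fun (i j l : Fin 2) =>
      congrArg (fun t => (Module.Basis.tensorProduct b (Module.Basis.tensorProduct b b)).repr t (i, (j, l))) hyz
    simp only [map_add, map_sub, map_smul, Finsupp.add_apply, Finsupp.sub_apply,
      Finsupp.smul_apply, smul_eq_mul, Module.Basis.tensorProduct_repr_tmul_apply,
      Module.Basis.repr_self, Finsupp.single_apply] at key
    have k000 := key 0 0 0
    have k001 := key 0 0 1
    have k010 := key 0 1 0
    have k011 := key 0 1 1
    have k100 := key 1 0 0
    have k101 := key 1 0 1
    have k110 := key 1 1 0
    have k111 := key 1 1 1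
    norm_num at k000 k001 k010 k011 k100 k101 k110 k111
    refine ⟨by linear_combination k000, by linear_combination -k111, ?_, ?_⟩
    · linear_combination k010 + k100 + k001
    · linear_combination k101 + k011 + k110
  · -- equations → membership
    rw [part2 he]
    refine Submodule.add_mem_sup ⟨_, rfl⟩ ⟨_, rfl⟩

end OrePaper
end

section
/- Suppose σ(x_1) = m_{11} x_1 and σ(x_2) = m_{22} x_2 with m_{11}m_{22} ≠ 0, and let r = x_1⊗x_2 + x_2⊗x_1 ∈ V⊗V. Then D(r) ∈ r⊗V + V⊗r if and only if the following four equations hold: (m_{11}+1)γ_{21} = 0; (m_{22}+1)γ_{13} = 0; (m_{22}+1)γ_{11} + (1−m_{11})γ_{22} = 0; (m_{22}−1)γ_{12} + (m_{11}+1)γ_{23} = 0. In that case, D(r) = r⊗δ_r + δ_l⊗r with δ_r = (m_{22}γ_{11} + γ_{22}) x_1 + m_{11}γ_{23} x_2 and δ_l = γ_{11} x_1 + (m_{22}γ_{12} + γ_{23}) x_2. -/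
set_option maxRecDepth 8000

open scoped TensorProduct
open TensorProduct

namespace OrePaper

/-- The lemma in Case (ii)(1)① of Section 4.2: quantum plane `k⟨x₁,x₂⟩/(x₁x₂ + x₂x₁)` with diagonal graded automorphism. -/
theorem lemma_quantum_plane_diag {k : Type*} [Field k] [CharZero k]
    {V : Type*} [AddCommGroup V] [Module k V]
    (b : Module.Basis (Fin 2) k V)
    (σ : V →ₗ[k] V) (δ : V →ₗ[k] V ⊗[k] V)
    (m11 m22 : k) (γ11 γ12 γ13 γ21 γ22 γ23 : k)
    (hσ1 : σ (b 0) = m11 • b 0)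
    (hσ2 : σ (b 1) = m22 • b 1)
    (hdet : m11 * m22 ≠ 0)
    (hδ1 : δ (b 0) = γ11 • (b 0 ⊗ₜ[k] b 0) + γ12 • (b 1 ⊗ₜ[k] b 0) + γ13 • (b 1 ⊗ₜ[k] b 1))
    (hδ2 : δ (b 1) = γ21 • (b 0 ⊗ₜ[k] b 0) + γ22 • (b 1 ⊗ₜ[k] b 0) + γ23 • (b 1 ⊗ₜ[k] b 1))
    (D : V ⊗[k] V →ₗ[k] V ⊗[k] (V ⊗[k] V))
    (hD : D = TensorProduct.map σ δ
        + (TensorProduct.assoc k V V V).toLinearMap ∘ₗ TensorProduct.map δ LinearMap.id)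
    (r : V ⊗[k] V) (hr : r = b 0 ⊗ₜ[k] b 1 + b 1 ⊗ₜ[k] b 0) :
    (D r ∈ LinearMap.range
          ((TensorProduct.assoc k V V V).toLinearMap ∘ₗ TensorProduct.mk k (V ⊗[k] V) V r)
        ⊔ LinearMap.range ((TensorProduct.mk k V (V ⊗[k] V)).flip r)
      ↔ ((m11 + 1) * γ21 = 0
        ∧ (m22 + 1) * γ13 = 0
        ∧ (m22 + 1) * γ11 + (1 - m11) * γ22 = 0
        ∧ (m22 - 1) * γ12 + (m11 + 1) * γ23 = 0))
    ∧ (((m11 + 1) * γ21 = 0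
        ∧ (m22 + 1) * γ13 = 0
        ∧ (m22 + 1) * γ11 + (1 - m11) * γ22 = 0
        ∧ (m22 - 1) * γ12 + (m11 + 1) * γ23 = 0) →
        D r = (TensorProduct.assoc k V V V) (r ⊗ₜ[k] ((m22 * γ11 + γ22) • b 0 + (m11 * γ23) • b 1))
            + (γ11 • b 0 + (m22 * γ12 + γ23) • b 1) ⊗ₜ[k] r) := by
  have hDr : D r
      = ((m11 + 1) * γ21) • (b 0 ⊗ₜ[k] (b 0 ⊗ₜ[k] b 0))
      + γ11 • (b 0 ⊗ₜ[k] (b 0 ⊗ₜ[k] b 1))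
      + (m11 * γ22) • (b 0 ⊗ₜ[k] (b 1 ⊗ₜ[k] b 0))
      + (m11 * γ23) • (b 0 ⊗ₜ[k] (b 1 ⊗ₜ[k] b 1))
      + (m22 * γ11 + γ22) • (b 1 ⊗ₜ[k] (b 0 ⊗ₜ[k] b 0))
      + γ12 • (b 1 ⊗ₜ[k] (b 0 ⊗ₜ[k] b 1))
      + (m22 * γ12 + γ23) • (b 1 ⊗ₜ[k] (b 1 ⊗ₜ[k] b 0))
      + ((m22 + 1) * γ13) • (b 1 ⊗ₜ[k] (b 1 ⊗ₜ[k] b 1)) := by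
    rw [hD, hr]
    simp only [map_add, LinearMap.add_apply, LinearMap.coe_comp, LinearEquiv.coe_coe,
      Function.comp_apply, TensorProduct.map_tmul, LinearMap.id_coe, id_eq,
      hσ1, hσ2, hδ1, hδ2, tmul_add, add_tmul, ← smul_tmul', tmul_smul, map_smul,
      assoc_tmul, smul_smul]
    module
  -- part 2 first
  have part2 : (((m11 + 1) * γ21 = 0
        ∧ (m22 + 1) * γ13 = 0
        ∧ (m22 + 1) * γ11 + (1 - m11) * γ22 = 0
        ∧ (m22 - 1) * γ12 + (m11 + 1) * γ23 = 0) →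
        D r = (TensorProduct.assoc k V V V) (r ⊗ₜ[k] ((m22 * γ11 + γ22) • b 0 + (m11 * γ23) • b 1))
            + (γ11 • b 0 + (m22 * γ12 + γ23) • b 1) ⊗ₜ[k] r) := by
    rintro ⟨h1, h2, h3, h4⟩
    rw [hDr, hr]
    simp only [tmul_add, add_tmul, ← smul_tmul', tmul_smul, map_smul, map_add,
      assoc_tmul, smul_smul]
    match_scalars
    · linear_combination h1
    · ring
    · linear_combination -h3
    · ring
    · ring
    · linear_combination -h4
    · ring
    · linear_combination h2
  refine ⟨⟨?_, fun h => ?_⟩, part2⟩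
  · intro hmem
    rcases Submodule.mem_sup.1 hmem with ⟨u, hu, v, hv, huv⟩
    rcases hu with ⟨c, rfl⟩
    rcases hv with ⟨c', rfl⟩
    -- expand c, c' in the basis
    obtain ⟨c1, c2, hc⟩ : ∃ c1 c2 : k, c = c1 • b 0 + c2 • b 1 := by
      refine ⟨b.repr c 0, b.repr c 1, ?_⟩
      have := b.sum_repr c
      rw [Fin.sum_univ_two] at this
      exact this.symm
    obtain ⟨d1, d2, hc'⟩ : ∃ d1 d2 : k, c' = d1 • b 0 + d2 • b 1 := by
      refine ⟨b.repr c' 0, b.repr c' 1, ?_⟩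
      have := b.sum_repr c'
      rw [Fin.sum_univ_two] at this
      exact this.symm
    rw [hDr] at huv
    rw [hr, hc, hc'] at huv
    have huv' : ((m11 + 1) * γ21) • (b 0 ⊗ₜ[k] (b 0 ⊗ₜ[k] b 0))
      + γ11 • (b 0 ⊗ₜ[k] (b 0 ⊗ₜ[k] b 1))
      + (m11 * γ22) • (b 0 ⊗ₜ[k] (b 1 ⊗ₜ[k] b 0))
      + (m11 * γ23) • (b 0 ⊗ₜ[k] (b 1 ⊗ₜ[k] b 1))
      + (m22 * γ11 + γ22) • (b 1 ⊗ₜ[k] (b 0 ⊗ₜ[k] b 0))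
      + γ12 • (b 1 ⊗ₜ[k] (b 0 ⊗ₜ[k] b 1))
      + (m22 * γ12 + γ23) • (b 1 ⊗ₜ[k] (b 1 ⊗ₜ[k] b 0))
      + ((m22 + 1) * γ13) • (b 1 ⊗ₜ[k] (b 1 ⊗ₜ[k] b 1))
      = d1 • (b 0 ⊗ₜ[k] (b 0 ⊗ₜ[k] b 1))
      + (c1 + d1) • (b 0 ⊗ₜ[k] (b 1 ⊗ₜ[k] b 0))
      + c2 • (b 0 ⊗ₜ[k] (b 1 ⊗ₜ[k] b 1))
      + c1 • (b 1 ⊗ₜ[k] (b 0 ⊗ₜ[k] b 0))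
      + (c2 + d2) • (b 1 ⊗ₜ[k] (b 0 ⊗ₜ[k] b 1))
      + d2 • (b 1 ⊗ₜ[k] (b 1 ⊗ₜ[k] b 0)) := by
      rw [← huv]
      simp only [LinearMap.coe_comp, LinearEquiv.coe_coe, Function.comp_apply,
        TensorProduct.mk_apply, LinearMap.flip_apply, LinearMap.add_apply, tmul_add, add_tmul,
        ← smul_tmul', tmul_smul, map_smul, map_add, assoc_tmul, smul_smul]
      module
    set B := b.tensorProduct (b.tensorProduct b) with hB
    have coeff : ∀ p : Fin 2 × Fin 2 × Fin 2,
        B.repr (((m11 + 1) * γ21) • (b 0 ⊗ₜ[k] (b 0 ⊗ₜ[k] b 0))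
      + γ11 • (b 0 ⊗ₜ[k] (b 0 ⊗ₜ[k] b 1))
      + (m11 * γ22) • (b 0 ⊗ₜ[k] (b 1 ⊗ₜ[k] b 0))
      + (m11 * γ23) • (b 0 ⊗ₜ[k] (b 1 ⊗ₜ[k] b 1))
      + (m22 * γ11 + γ22) • (b 1 ⊗ₜ[k] (b 0 ⊗ₜ[k] b 0))
      + γ12 • (b 1 ⊗ₜ[k] (b 0 ⊗ₜ[k] b 1))
      + (m22 * γ12 + γ23) • (b 1 ⊗ₜ[k] (b 1 ⊗ₜ[k] b 0))
      + ((m22 + 1) * γ13) • (b 1 ⊗ₜ[k] (b 1 ⊗ₜ[k] b 1))) p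
        = B.repr (d1 • (b 0 ⊗ₜ[k] (b 0 ⊗ₜ[k] b 1))
      + (c1 + d1) • (b 0 ⊗ₜ[k] (b 1 ⊗ₜ[k] b 0))
      + c2 • (b 0 ⊗ₜ[k] (b 1 ⊗ₜ[k] b 1))
      + c1 • (b 1 ⊗ₜ[k] (b 0 ⊗ₜ[k] b 0))
      + (c2 + d2) • (b 1 ⊗ₜ[k] (b 0 ⊗ₜ[k] b 1))
      + d2 • (b 1 ⊗ₜ[k] (b 1 ⊗ₜ[k] b 0))) p := fun p => by rw [huv']
    have e000 := coeff (0, 0, 0)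
    have e001 := coeff (0, 0, 1)
    have e010 := coeff (0, 1, 0)
    have e011 := coeff (0, 1, 1)
    have e100 := coeff (1, 0, 0)
    have e101 := coeff (1, 0, 1)
    have e110 := coeff (1, 1, 0)
    have e111 := coeff (1, 1, 1)
    simp only [hB, map_add, map_smul, Finsupp.add_apply, Finsupp.smul_apply,
      Module.Basis.tensorProduct_repr_tmul_apply, Module.Basis.repr_self, Finsupp.single_apply,
      smul_eq_mul] at e000 e001 e010 e011 e100 e101 e110 e111
    norm_num at e000 e001 e010 e011 e100 e101 e110 e111
    refine ⟨mul_eq_zero.mpr e000, mul_eq_zero.mpr e111, ?_, ?_⟩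
    · linear_combination -e010 + e100 + e001
    · linear_combination -e101 + e011 + e110
  · exact part2 h ▸ Submodule.add_mem_sup
      ⟨(m22 * γ11 + γ22) • b 0 + (m11 * γ23) • b 1, rfl⟩
      ⟨γ11 • b 0 + (m22 * γ12 + γ23) • b 1, rfl⟩

end OrePaper
end

section
/- Suppose σ(x_1) = m_{12} x_2 and σ(x_2) = m_{21} x_1 with m_{12}m_{21} ≠ 0, and let r = x_1⊗x_2 + x_2⊗x_1 ∈ V⊗V. Then D(r) ∈ r⊗V + V⊗r if and only if the following four equations hold: m_{21}γ_{11} + γ_{21} = 0; m_{12}γ_{23} + γ_{13} = 0; γ_{11} − m_{21}γ_{12} + m_{12}γ_{21} + γ_{22} = 0; −γ_{12} + m_{21}γ_{13} + m_{12}γ_{22} + γ_{23} = 0. In that case, D(r) = r⊗δ_r + δ_l⊗r with δ_r = (m_{12}γ_{21} + γ_{22}) x_1 + m_{21}γ_{13} x_2 and δ_l = γ_{11} x_1 + (m_{12}γ_{22} + γ_{23}) x_2. -/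
open scoped TensorProduct

namespace OrePaper

set_option maxHeartbeats 2000000

/-- The lemma in Case (ii)(1)② of Section 4.2: quantum plane `k⟨x₁,x₂⟩/(x₁x₂ + x₂x₁)` with antidiagonal graded automorphism. -/
theorem lemma_quantum_plane_antidiag {k : Type*} [Field k] [CharZero k]
    {V : Type*} [AddCommGroup V] [Module k V]
    (b : Module.Basis (Fin 2) k V)
    (σ : V →ₗ[k] V) (δ : V →ₗ[k] V ⊗[k] V)
    (m12 m21 : k) (γ11 γ12 γ13 γ21 γ22 γ23 : k)
    (hσ1 : σ (b 0) = m12 • b 1)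
    (hσ2 : σ (b 1) = m21 • b 0)
    (hdet : m12 * m21 ≠ 0)
    (hδ1 : δ (b 0) = γ11 • (b 0 ⊗ₜ[k] b 0) + γ12 • (b 1 ⊗ₜ[k] b 0) + γ13 • (b 1 ⊗ₜ[k] b 1))
    (hδ2 : δ (b 1) = γ21 • (b 0 ⊗ₜ[k] b 0) + γ22 • (b 1 ⊗ₜ[k] b 0) + γ23 • (b 1 ⊗ₜ[k] b 1))
    (D : V ⊗[k] V →ₗ[k] V ⊗[k] (V ⊗[k] V))
    (hD : D = TensorProduct.map σ δ
        + (TensorProduct.assoc k V V V).toLinearMap ∘ₗ TensorProduct.map δ LinearMap.id)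
    (r : V ⊗[k] V) (hr : r = b 0 ⊗ₜ[k] b 1 + b 1 ⊗ₜ[k] b 0) :
    (D r ∈ LinearMap.range
          ((TensorProduct.assoc k V V V).toLinearMap ∘ₗ TensorProduct.mk k (V ⊗[k] V) V r)
        ⊔ LinearMap.range ((TensorProduct.mk k V (V ⊗[k] V)).flip r)
      ↔ (m21 * γ11 + γ21 = 0
        ∧ m12 * γ23 + γ13 = 0
        ∧ γ11 - m21 * γ12 + m12 * γ21 + γ22 = 0
        ∧ -γ12 + m21 * γ13 + m12 * γ22 + γ23 = 0))
    ∧ ((m21 * γ11 + γ21 = 0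
        ∧ m12 * γ23 + γ13 = 0
        ∧ γ11 - m21 * γ12 + m12 * γ21 + γ22 = 0
        ∧ -γ12 + m21 * γ13 + m12 * γ22 + γ23 = 0) →
        D r = (TensorProduct.assoc k V V V) (r ⊗ₜ[k] ((m12 * γ21 + γ22) • b 0 + (m21 * γ13) • b 1))
            + (γ11 • b 0 + (m12 * γ22 + γ23) • b 1) ⊗ₜ[k] r) := by
  have hDr : D r = (m21*γ11 + γ21) • (b 0 ⊗ₜ[k] (b 0 ⊗ₜ[k] b 0)) + γ11 • (b 0 ⊗ₜ[k] (b 0 ⊗ₜ[k] b 1))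
      + (m21*γ12) • (b 0 ⊗ₜ[k] (b 1 ⊗ₜ[k] b 0)) + (m21*γ13) • (b 0 ⊗ₜ[k] (b 1 ⊗ₜ[k] b 1))
      + (m12*γ21+γ22) • (b 1 ⊗ₜ[k] (b 0 ⊗ₜ[k] b 0)) + γ12 • (b 1 ⊗ₜ[k] (b 0 ⊗ₜ[k] b 1))
      + (m12*γ22+γ23) • (b 1 ⊗ₜ[k] (b 1 ⊗ₜ[k] b 0)) + (m12*γ23+γ13) • (b 1 ⊗ₜ[k] (b 1 ⊗ₜ[k] b 1)) := by
    rw [hD, hr]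
    simp [hσ1, hσ2, hδ1, hδ2, TensorProduct.tmul_add, TensorProduct.add_tmul,
      TensorProduct.smul_tmul, TensorProduct.tmul_smul, TensorProduct.assoc_tmul]
    module
  -- the key equality
  have key : (m21 * γ11 + γ21 = 0 ∧ m12 * γ23 + γ13 = 0
        ∧ γ11 - m21 * γ12 + m12 * γ21 + γ22 = 0
        ∧ -γ12 + m21 * γ13 + m12 * γ22 + γ23 = 0) →
        D r = (TensorProduct.assoc k V V V) (r ⊗ₜ[k] ((m12 * γ21 + γ22) • b 0 + (m21 * γ13) • b 1))
            + (γ11 • b 0 + (m12 * γ22 + γ23) • b 1) ⊗ₜ[k] r := by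
    rintro ⟨h1, h2, h3, h4⟩
    rw [hDr, hr]
    simp only [TensorProduct.tmul_add, TensorProduct.add_tmul, TensorProduct.smul_tmul,
      TensorProduct.tmul_smul, TensorProduct.assoc_tmul, map_add, map_smul, ← TensorProduct.smul_tmul']
    match_scalars
    all_goals
      first
      | ring1
      | linear_combination h1
      | linear_combination h2
      | linear_combination h3
      | linear_combination h4
      | linear_combination -h1
      | linear_combination -h2
      | linear_combination -h3
      | linear_combination -h4
  refine ⟨⟨fun hmem => ?_, fun h => ?_⟩, key⟩
  · -- forward
    rw [Submodule.mem_sup] at hmem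
    obtain ⟨y, hy, z, hz, hyz⟩ := hmem
    rw [LinearMap.mem_range] at hy hz
    obtain ⟨v, rfl⟩ := hy
    obtain ⟨w, rfl⟩ := hz
    set B3 := Module.Basis.tensorProduct b (Module.Basis.tensorProduct b b) with hB3
    have hv : v = b.repr v 0 • b 0 + b.repr v 1 • b 1 := by
      have := b.sum_repr v; rw [Fin.sum_univ_two] at this; exact this.symm
    have hw : w = b.repr w 0 • b 0 + b.repr w 1 • b 1 := by
      have := b.sum_repr w; rw [Fin.sum_univ_two] at this; exact this.symm
    set a := b.repr v 0; set c := b.repr v 1; set d := b.repr w 0; set e := b.repr w 1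
    rw [hDr] at hyz
    rw [hv, hw, hr] at hyz
    simp only [LinearMap.coe_comp, LinearEquiv.coe_coe, Function.comp_apply,
      TensorProduct.mk_apply, LinearMap.flip_apply,
      TensorProduct.tmul_add, TensorProduct.add_tmul, TensorProduct.smul_tmul,
      TensorProduct.tmul_smul, TensorProduct.assoc_tmul, map_add, map_smul,
      ← TensorProduct.smul_tmul'] at hyz
    have coeffs := fun (p : Fin 2 × Fin 2 × Fin 2) => congrArg (fun x => B3.repr x p) hyz
    have key000 := coeffs (0, 0, 0)
    have key001 := coeffs (0, 0, 1)
    have key010 := coeffs (0, 1, 0)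
    have key011 := coeffs (0, 1, 1)
    have key100 := coeffs (1, 0, 0)
    have key101 := coeffs (1, 0, 1)
    have key110 := coeffs (1, 1, 0)
    have key111 := coeffs (1, 1, 1)
    simp [hB3, Finsupp.single_apply, -Prod.mk_zero_zero, -Prod.mk_one_one] at key000 key001 key010 key011 key100 key101 key110 key111
    refine ⟨by linear_combination -key000, by linear_combination -key111,
      by linear_combination -key001 + key010 - key100,
      by linear_combination key101 - key011 - key110⟩
  · -- backward: membership
    rw [key h]
    apply Submodule.add_mem_sup
    · exact ⟨(m12 * γ21 + γ22) • b 0 + (m21 * γ13) • b 1, rfl⟩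
    · exact ⟨γ11 • b 0 + (m12 * γ22 + γ23) • b 1, rfl⟩
end OrePaper
end

section
/- Let q ∈ k with q ≠ 0, q ≠ 1 and q ≠ −1. Suppose σ(x_1) = m_{11} x_1 and σ(x_2) = m_{22} x_2 with m_{11}m_{22} ≠ 0, and let r = x_1⊗x_2 − q·x_2⊗x_1 ∈ V⊗V. Then D(r) ∈ r⊗V + V⊗r if and only if the following four equations hold: (m_{11}−q)γ_{21} = 0; (1−q m_{22})γ_{13} = 0; (m_{22}−q)γ_{11} + (1−m_{11})γ_{22} = 0; (m_{22}−1)γ_{12} + (1−q m_{11})γ_{23} = 0. In that case, D(r) = r⊗δ_r + δ_l⊗r with δ_r = (m_{22}γ_{11} + γ_{22}) x_1 + m_{11}γ_{23} x_2 and δ_l = γ_{11} x_1 + (m_{22}γ_{12} + γ_{23}) x_2. -/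
open scoped TensorProduct

namespace OrePaper

set_option maxHeartbeats 1600000 in
/-- The lemma in Case (ii)(2) of Section 4.2: quantum plane `k⟨x₁,x₂⟩/(x₁x₂ − q x₂x₁)` with `q ≠ 0, ±1` and diagonal graded automorphism. -/
theorem lemma_quantum_plane_q {k : Type*} [Field k] [CharZero k]
    {V : Type*} [AddCommGroup V] [Module k V]
    (b : Module.Basis (Fin 2) k V)
    (σ : V →ₗ[k] V) (δ : V →ₗ[k] V ⊗[k] V)
    (q m11 m22 : k) (γ11 γ12 γ13 γ21 γ22 γ23 : k)
    (hq0 : q ≠ 0) (hq1 : q ≠ 1) (hq2 : q ≠ -1)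
    (hσ1 : σ (b 0) = m11 • b 0)
    (hσ2 : σ (b 1) = m22 • b 1)
    (hdet : m11 * m22 ≠ 0)
    (hδ1 : δ (b 0) = γ11 • (b 0 ⊗ₜ[k] b 0) + γ12 • (b 1 ⊗ₜ[k] b 0) + γ13 • (b 1 ⊗ₜ[k] b 1))
    (hδ2 : δ (b 1) = γ21 • (b 0 ⊗ₜ[k] b 0) + γ22 • (b 1 ⊗ₜ[k] b 0) + γ23 • (b 1 ⊗ₜ[k] b 1))
    (D : V ⊗[k] V →ₗ[k] V ⊗[k] (V ⊗[k] V))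
    (hD : D = TensorProduct.map σ δ
        + (TensorProduct.assoc k V V V).toLinearMap ∘ₗ TensorProduct.map δ LinearMap.id)
    (r : V ⊗[k] V) (hr : r = b 0 ⊗ₜ[k] b 1 - q • (b 1 ⊗ₜ[k] b 0)) :
    (D r ∈ LinearMap.range
          ((TensorProduct.assoc k V V V).toLinearMap ∘ₗ TensorProduct.mk k (V ⊗[k] V) V r)
        ⊔ LinearMap.range ((TensorProduct.mk k V (V ⊗[k] V)).flip r)
      ↔ ((m11 - q) * γ21 = 0
        ∧ (1 - q * m22) * γ13 = 0
        ∧ (m22 - q) * γ11 + (1 - m11) * γ22 = 0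
        ∧ (m22 - 1) * γ12 + (1 - q * m11) * γ23 = 0))
    ∧ (((m11 - q) * γ21 = 0
        ∧ (1 - q * m22) * γ13 = 0
        ∧ (m22 - q) * γ11 + (1 - m11) * γ22 = 0
        ∧ (m22 - 1) * γ12 + (1 - q * m11) * γ23 = 0) →
        D r = (TensorProduct.assoc k V V V) (r ⊗ₜ[k] ((m22 * γ11 + γ22) • b 0 + (m11 * γ23) • b 1))
            + (γ11 • b 0 + (m22 * γ12 + γ23) • b 1) ⊗ₜ[k] r) := by
  subst hD hr
  have hDr : (TensorProduct.map σ δ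
        + (TensorProduct.assoc k V V V).toLinearMap ∘ₗ TensorProduct.map δ LinearMap.id)
        (b 0 ⊗ₜ[k] b 1 - q • (b 1 ⊗ₜ[k] b 0))
      = ((m11 - q) * γ21) • (b 0 ⊗ₜ[k] (b 0 ⊗ₜ[k] b 0))
        + γ11 • (b 0 ⊗ₜ[k] (b 0 ⊗ₜ[k] b 1))
        + (m11 * γ22) • (b 0 ⊗ₜ[k] (b 1 ⊗ₜ[k] b 0))
        + (m11 * γ23) • (b 0 ⊗ₜ[k] (b 1 ⊗ₜ[k] b 1))
        + (-(q * m22 * γ11) - q * γ22) • (b 1 ⊗ₜ[k] (b 0 ⊗ₜ[k] b 0))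
        + γ12 • (b 1 ⊗ₜ[k] (b 0 ⊗ₜ[k] b 1))
        + (-(q * m22 * γ12) - q * γ23) • (b 1 ⊗ₜ[k] (b 1 ⊗ₜ[k] b 0))
        + ((1 - q * m22) * γ13) • (b 1 ⊗ₜ[k] (b 1 ⊗ₜ[k] b 1)) := by
    simp only [map_sub, map_smul, map_add, LinearMap.add_apply, LinearMap.coe_comp, Function.comp_apply,
      LinearEquiv.coe_coe, TensorProduct.map_tmul, LinearMap.id_coe, id_eq, hσ1, hσ2, hδ1, hδ2,
      TensorProduct.tmul_add, TensorProduct.add_tmul, TensorProduct.tmul_smul,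
      TensorProduct.smul_tmul, TensorProduct.assoc_tmul]
    module
  have himp : (((m11 - q) * γ21 = 0
        ∧ (1 - q * m22) * γ13 = 0
        ∧ (m22 - q) * γ11 + (1 - m11) * γ22 = 0
        ∧ (m22 - 1) * γ12 + (1 - q * m11) * γ23 = 0) →
        (TensorProduct.map σ δ
          + (TensorProduct.assoc k V V V).toLinearMap ∘ₗ TensorProduct.map δ LinearMap.id)
          (b 0 ⊗ₜ[k] b 1 - q • (b 1 ⊗ₜ[k] b 0))
        = (TensorProduct.assoc k V V V)
            ((b 0 ⊗ₜ[k] b 1 - q • (b 1 ⊗ₜ[k] b 0)) ⊗ₜ[k]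
              ((m22 * γ11 + γ22) • b 0 + (m11 * γ23) • b 1))
            + (γ11 • b 0 + (m22 * γ12 + γ23) • b 1) ⊗ₜ[k]
                (b 0 ⊗ₜ[k] b 1 - q • (b 1 ⊗ₜ[k] b 0))) := by
    rintro ⟨e1, e2, e3, e4⟩
    rw [hDr]
    simp only [TensorProduct.tmul_add, TensorProduct.add_tmul, TensorProduct.tmul_sub,
      TensorProduct.sub_tmul, TensorProduct.tmul_smul, TensorProduct.smul_tmul, map_add, map_sub,
      map_smul, TensorProduct.assoc_tmul]
    match_scalars
    · linear_combination e1
    · ring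
    · linear_combination -e3
    · ring
    · ring
    · linear_combination -e4
    · ring
    · linear_combination e2
  refine ⟨⟨?_, fun h => by rw [himp h]; exact Submodule.add_mem_sup ⟨_, rfl⟩ ⟨_, rfl⟩⟩, himp⟩
  intro hmem
  rw [Submodule.mem_sup] at hmem
  obtain ⟨y, ⟨u, rfl⟩, z, ⟨v, rfl⟩, hyz⟩ := hmem
  obtain ⟨u0, u1, rfl⟩ : ∃ a c, u = a • b 0 + c • b 1 := by
    refine ⟨b.repr u 0, b.repr u 1, ?_⟩
    have := b.sum_repr u
    rw [Fin.sum_univ_two] at this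
    exact this.symm
  obtain ⟨v0, v1, rfl⟩ : ∃ a c, v = a • b 0 + c • b 1 := by
    refine ⟨b.repr v 0, b.repr v 1, ?_⟩
    have := b.sum_repr v
    rw [Fin.sum_univ_two] at this
    exact this.symm
  rw [hDr] at hyz
  simp only [LinearMap.coe_comp, Function.comp_apply, LinearEquiv.coe_coe,
    TensorProduct.mk_apply, LinearMap.flip_apply, LinearMap.sub_apply, LinearMap.add_apply,
    LinearMap.smul_apply, TensorProduct.tmul_add,
    TensorProduct.add_tmul, TensorProduct.tmul_sub, TensorProduct.sub_tmul,
    TensorProduct.tmul_smul, TensorProduct.smul_tmul, map_add, map_sub, map_smul,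
    TensorProduct.assoc_tmul] at hyz
  have hrep := congrArg (Module.Basis.tensorProduct b (Module.Basis.tensorProduct b b)).repr hyz
  have h000 := DFunLike.congr_fun hrep (0, 0, 0)
  have h001 := DFunLike.congr_fun hrep (0, 0, 1)
  have h010 := DFunLike.congr_fun hrep (0, 1, 0)
  have h011 := DFunLike.congr_fun hrep (0, 1, 1)
  have h100 := DFunLike.congr_fun hrep (1, 0, 0)
  have h101 := DFunLike.congr_fun hrep (1, 0, 1)
  have h110 := DFunLike.congr_fun hrep (1, 1, 0)
  have h111 := DFunLike.congr_fun hrep (1, 1, 1)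
  simp only [map_add, map_sub, map_smul, Finsupp.add_apply, Finsupp.sub_apply,
    Finsupp.smul_apply, Module.Basis.tensorProduct_repr_tmul_apply, Module.Basis.repr_self,
    Finsupp.single_apply, smul_eq_mul] at h000 h001 h010 h011 h100 h101 h110 h111
  norm_num at h000 h001 h010 h011 h100 h101 h110 h111
  refine ⟨mul_eq_zero.mpr h000, mul_eq_zero.mpr h111, ?_, ?_⟩
  · have hu0 : u0 = m22 * γ11 + γ22 :=
      mul_right_cancel₀ hq0 (by linear_combination -h100)
    linear_combination -hu0 + h010 + q * h001
  · have hv1 : v1 = m22 * γ12 + γ23 :=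
      mul_right_cancel₀ hq0 (by linear_combination -h110)
    linear_combination -hv1 + h101 + q * h011
end OrePaper
end

section
/- Suppose σ(x_1) = m_{11} x_1 + m_{12} x_2 and σ(x_2) = m_{11} x_2 with m_{11} ≠ 0, and let r = x_1⊗x_2 − x_2⊗x_1 − x_2⊗x_2 ∈ V⊗V. Then D(r) ∈ r⊗V + V⊗r if and only if the following four equations hold: (m_{11}−1)γ_{21} = 0; (m_{11}−1)γ_{11} + (m_{11}−m_{12}+1)γ_{21} + (1−m_{11})γ_{22} = 0; −(m_{11}+1)γ_{11} + (m_{11}−1)γ_{12} + (1−m_{11}+m_{12})γ_{21} + (m_{11}−m_{12})γ_{22} + (1−m_{11})γ_{23} = 0; −2γ_{11} − γ_{12} + (m_{11}−1)γ_{13} + 2γ_{21} + γ_{22} + (1−m_{11}−m_{12})γ_{23} = 0. In that case, D(r) = r⊗δ_r + δ_l⊗r with δ_r = (m_{11}γ_{11} + (m_{11}−m_{12})γ_{21} + γ_{22}) x_1 + (γ_{11} − γ_{21} + m_{11}γ_{23}) x_2 and δ_l = (γ_{11} − γ_{21}) x_1 + (γ_{11} + γ_{12} − γ_{21} − γ_{22}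 + m_{11}γ_{23}) x_2. -/
open scoped TensorProduct

namespace OrePaper

set_option maxHeartbeats 2000000 in
/-- The lemma in Case (iii) of Section 4.2: Jordan plane `k⟨x₁,x₂⟩/(x₁x₂ − x₂x₁ − x₂²)` with upper-triangular graded automorphism. -/
theorem lemma_jordan_plane {k : Type*} [Field k] [CharZero k]
    {V : Type*} [AddCommGroup V] [Module k V]
    (b : Module.Basis (Fin 2) k V)
    (σ : V →ₗ[k] V) (δ : V →ₗ[k] V ⊗[k] V)
    (m11 m12 : k) (γ11 γ12 γ13 γ21 γ22 γ23 : k)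
    (hσ1 : σ (b 0) = m11 • b 0 + m12 • b 1)
    (hσ2 : σ (b 1) = m11 • b 1)
    (hdet : m11 ≠ 0)
    (hδ1 : δ (b 0) = γ11 • (b 0 ⊗ₜ[k] b 0) + γ12 • (b 1 ⊗ₜ[k] b 0) + γ13 • (b 1 ⊗ₜ[k] b 1))
    (hδ2 : δ (b 1) = γ21 • (b 0 ⊗ₜ[k] b 0) + γ22 • (b 1 ⊗ₜ[k] b 0) + γ23 • (b 1 ⊗ₜ[k] b 1))
    (D : V ⊗[k] V →ₗ[k] V ⊗[k] (V ⊗[k] V))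
    (hD : D = TensorProduct.map σ δ
        + (TensorProduct.assoc k V V V).toLinearMap ∘ₗ TensorProduct.map δ LinearMap.id)
    (r : V ⊗[k] V) (hr : r = b 0 ⊗ₜ[k] b 1 - b 1 ⊗ₜ[k] b 0 - b 1 ⊗ₜ[k] b 1) :
    (D r ∈ LinearMap.range
          ((TensorProduct.assoc k V V V).toLinearMap ∘ₗ TensorProduct.mk k (V ⊗[k] V) V r)
        ⊔ LinearMap.range ((TensorProduct.mk k V (V ⊗[k] V)).flip r)
      ↔ ((m11 - 1) * γ21 = 0
        ∧ (m11 - 1) * γ11 + (m11 - m12 + 1) * γ21 + (1 - m11) * γ22 = 0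
        ∧ -(m11 + 1) * γ11 + (m11 - 1) * γ12 + (1 - m11 + m12) * γ21
            + (m11 - m12) * γ22 + (1 - m11) * γ23 = 0
        ∧ -(2 * γ11) - γ12 + (m11 - 1) * γ13 + 2 * γ21 + γ22
            + (1 - m11 - m12) * γ23 = 0))
    ∧ (((m11 - 1) * γ21 = 0
        ∧ (m11 - 1) * γ11 + (m11 - m12 + 1) * γ21 + (1 - m11) * γ22 = 0
        ∧ -(m11 + 1) * γ11 + (m11 - 1) * γ12 + (1 - m11 + m12) * γ21
            + (m11 - m12) * γ22 + (1 - m11) * γ23 = 0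
        ∧ -(2 * γ11) - γ12 + (m11 - 1) * γ13 + 2 * γ21 + γ22
            + (1 - m11 - m12) * γ23 = 0) →
        D r = (TensorProduct.assoc k V V V) (r ⊗ₜ[k] ((m11 * γ11 + (m11 - m12) * γ21 + γ22) • b 0 + (γ11 - γ21 + m11 * γ23) • b 1))
            + ((γ11 - γ21) • b 0 + (γ11 + γ12 - γ21 - γ22 + m11 * γ23) • b 1) ⊗ₜ[k] r) := by

  have hmain : ((m11 - 1) * γ21 = 0
        ∧ (m11 - 1) * γ11 + (m11 - m12 + 1) * γ21 + (1 - m11) * γ22 = 0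
        ∧ -(m11 + 1) * γ11 + (m11 - 1) * γ12 + (1 - m11 + m12) * γ21
            + (m11 - m12) * γ22 + (1 - m11) * γ23 = 0
        ∧ -(2 * γ11) - γ12 + (m11 - 1) * γ13 + 2 * γ21 + γ22
            + (1 - m11 - m12) * γ23 = 0) →
        D r = (TensorProduct.assoc k V V V) (r ⊗ₜ[k] ((m11 * γ11 + (m11 - m12) * γ21 + γ22) • b 0 + (γ11 - γ21 + m11 * γ23) • b 1))
            + ((γ11 - γ21) • b 0 + (γ11 + γ12 - γ21 - γ22 + m11 * γ23) • b 1) ⊗ₜ[k] r := by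
    rintro ⟨h1, h2, h3, h4⟩
    apply (Module.Basis.tensorProduct b (Module.Basis.tensorProduct b b)).ext_elem
    rintro ⟨i, j, l⟩
    subst hD hr
    simp only [LinearMap.add_apply, LinearMap.coe_comp, LinearEquiv.coe_coe, Function.comp_apply,
      map_sub, map_add, map_smul, TensorProduct.map_tmul, hσ1, hσ2, hδ1, hδ2,
      LinearMap.id_apply, TensorProduct.add_tmul, TensorProduct.tmul_add,
      TensorProduct.sub_tmul, TensorProduct.tmul_sub, TensorProduct.smul_tmul',
      TensorProduct.tmul_smul, TensorProduct.assoc_tmul,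
      Module.Basis.tensorProduct_repr_tmul_apply, Module.Basis.repr_self,
      Finsupp.add_apply, Finsupp.sub_apply, Finsupp.smul_apply, smul_eq_mul]
    fin_cases i <;> fin_cases j <;> fin_cases l <;>
      simp only [Fin.isValue, Finsupp.single_apply, Fin.mk_zero, Fin.mk_one,
        show ((0:Fin 2) = 1) = False by simp, show ((1:Fin 2) = 0) = False by simp,
        show ((0:Fin 2) = 0) = True by simp, show ((1:Fin 2) = 1) = True by simp,
        ite_true, ite_false, mul_zero, zero_mul, mul_one, one_mul,
        add_zero, zero_add, sub_zero, zero_sub, mul_ite] <;>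
      first
        | ring1
        | linear_combination h1
        | linear_combination -h2
        | linear_combination -h3
        | linear_combination -h4
  refine ⟨⟨?_, fun h => ?_⟩, hmain⟩
  · intro hmem
    rw [Submodule.mem_sup] at hmem
    obtain ⟨y, hy, z, hz, hyz⟩ := hmem
    obtain ⟨c, rfl⟩ := hy
    obtain ⟨c', rfl⟩ := hz
    have key : ∀ (i j l : Fin 2),
        (Module.Basis.tensorProduct b (Module.Basis.tensorProduct b b)).repr
            (((TensorProduct.assoc k V V V).toLinearMap ∘ₗ TensorProduct.mk k (V ⊗[k] V) V r) c
              + ((TensorProduct.mk k V (V ⊗[k] V)).flip r) c') (i, j, l)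
          = (Module.Basis.tensorProduct b (Module.Basis.tensorProduct b b)).repr (D r) (i, j, l) := by
      intro i j l; rw [hyz]
    have hc := b.sum_repr c
    have hc' := b.sum_repr c'
    rw [Fin.sum_univ_two] at hc hc'
    set c0 := b.repr c 0 with hc0
    set c1 := b.repr c 1 with hc1
    set d0 := b.repr c' 0 with hd0
    set d1 := b.repr c' 1 with hd1
    rw [← hc, ← hc'] at key
    subst hD hr
    simp only [LinearMap.add_apply, LinearMap.sub_apply, LinearMap.coe_comp, LinearEquiv.coe_coe,
      Function.comp_apply, TensorProduct.mk_apply, LinearMap.flip_apply,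
      map_sub, map_add, map_smul, TensorProduct.map_tmul, hσ1, hσ2, hδ1, hδ2,
      LinearMap.id_apply, TensorProduct.add_tmul, TensorProduct.tmul_add,
      TensorProduct.sub_tmul, TensorProduct.tmul_sub, TensorProduct.smul_tmul',
      TensorProduct.tmul_smul, TensorProduct.assoc_tmul,
      Module.Basis.tensorProduct_repr_tmul_apply, Module.Basis.repr_self] at key
    have e000 := key 0 0 0
    have e001 := key 0 0 1
    have e010 := key 0 1 0
    have e011 := key 0 1 1
    have e100 := key 1 0 0
    have e101 := key 1 0 1
    have e110 := key 1 1 0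
    have e111 := key 1 1 1
    clear key
    simp only [LinearMap.sub_apply, LinearMap.add_apply, map_sub, map_add, map_smul,
      TensorProduct.mk_apply, TensorProduct.assoc_tmul,
      Module.Basis.tensorProduct_repr_tmul_apply, Module.Basis.repr_self,
      Finsupp.add_apply, Finsupp.sub_apply, Finsupp.smul_apply, smul_eq_mul,
      Finsupp.single_apply,
      show ((0:Fin 2) = 1) = False by simp, show ((1:Fin 2) = 0) = False by simp,
      show ((0:Fin 2) = 0) = True by simp, show ((1:Fin 2) = 1) = True by simp,
      ite_true, ite_false, mul_zero, zero_mul, mul_one, one_mul,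
      add_zero, zero_add, sub_zero, zero_sub, mul_ite]
      at e000 e001 e010 e011 e100 e101 e110 e111
    refine ⟨by linear_combination -e000, by linear_combination e001 + e010 + e100,
      by linear_combination e001 + e011 - e100 + e101 + e110,
      by linear_combination 2*e001 + 2*e011 + e101 + e111⟩
  · rw [hmain h]
    rw [Submodule.mem_sup]
    refine ⟨_, LinearMap.mem_range_self _ ((m11 * γ11 + (m11 - m12) * γ21 + γ22) • b 0 + (γ11 - γ21 + m11 * γ23) • b 1),
      _, LinearMap.mem_range_self _ ((γ11 - γ21) • b 0 + (γ11 + γ12 - γ21 - γ22 + m11 * γ23) • b 1), ?_⟩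
    simp [TensorProduct.mk_apply, TensorProduct.add_tmul, TensorProduct.smul_tmul']


end OrePaper
end
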